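/- Let p be an odd prime, j ≥ 1, R = Z/p^jZ, and Q_n the hyperbolic form of rank 2n over R. Suppose A ∈ SO(Q_n; R) is diagonalizable over R with 2n distinct eigenvalues, none congruent to ±1 mod p, occurring in inverse pairs (λ_i, λ_i^{−1}), and with all pairwise differences of eigenvalues being units. Then every eigenvector of A in R^{2n} is isotropic for Q_n, and there exists an eigenbasis v_1,…,v_n,u_1,…,u_n such that ⟨v_i, u_i⟩ = 1, ⟨v_i, v_{i'}⟩ = ⟨u_i, u_{i'}⟩ = 0, and ⟨v_i, u_{i'}⟩ = 0 for i ≠ i'; in particular A is conjugate within the orthogonal group O(Q_n; R) to a diagonal matrix. -/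

import Mathlib

open Matrix

private lemma dot_conj' {R : Type*} [CommRing R] {ι : Type*} [Fintype ι]
    (Q P : Matrix ι ι R) (x y : ι → R) :
    P.mulVec x ⬝ᵥ Q.mulVec (P.mulVec y) = x ⬝ᵥ (Pᵀ * Q * P).mulVec y := by
  rw [Matrix.mulVec_mulVec, Matrix.dotProduct_mulVec, Matrix.dotProduct_mulVec, mul_assoc,
    ← Matrix.vecMul_vecMul, ← Matrix.vecMul_vecMul, ← Matrix.vecMul_vecMul,
    Matrix.vecMul_transpose]

private lemma gram_entry' {R : Type*} [CommRing R] {ι : Type*} [Fintype ι]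
    (Q P : Matrix ι ι R) (s t : ι) :
    (Pᵀ * Q * P) s t = (fun k => P k s) ⬝ᵥ Q.mulVec fun k => P k t := by
  simp only [Matrix.mul_apply, Matrix.transpose_apply, dotProduct, Matrix.mulVec,
    Finset.sum_mul, Finset.mul_sum]
  rw [Finset.sum_comm]
  exact Finset.sum_congr rfl fun k _ => Finset.sum_congr rfl fun c _ => by ring

/-- Over `R = ℤ/p^jℤ` (p odd), suppose `A ∈ SO(Q_n; R)` is diagonalizable with
`2n` distinct eigenvalues occurring in inverse pairs `(λ_i, λ_i⁻¹)`, none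
congruent to `±1` mod `p`, and with all pairwise differences of eigenvalues
units. Then every eigenvector of `A` is isotropic, there is an eigenbasis whose
Gram matrix is `Q_n` itself, and `A` is conjugate within `O(Q_n; R)` to a
diagonal matrix. -/
theorem statement_18 (p n j : ℕ) (hp : p.Prime) (hodd : p ≠ 2) (hn : 1 ≤ n)
    (hj : 1 ≤ j)
    (Qn : Matrix (Fin n ⊕ Fin n) (Fin n ⊕ Fin n) (ZMod (p ^ j)))
    (hQn : Qn = Matrix.fromBlocks 0 1 1 0)
    (A : Matrix (Fin n ⊕ Fin n) (Fin n ⊕ Fin n) (ZMod (p ^ j)))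
    (hdet : A.det = 1) (hO : Aᵀ * Qn * A = Qn)
    (lam : Fin n → (ZMod (p ^ j))ˣ)
    (μ : Fin n ⊕ Fin n → ZMod (p ^ j))
    (hμ : μ = Sum.elim (fun i => ((lam i : (ZMod (p ^ j))ˣ) : ZMod (p ^ j)))
      (fun i => (((lam i)⁻¹ : (ZMod (p ^ j))ˣ) : ZMod (p ^ j))))
    (b : Module.Basis (Fin n ⊕ Fin n) (ZMod (p ^ j)) (Fin n ⊕ Fin n → ZMod (p ^ j)))
    (hb : ∀ s, A.mulVec (b s) = μ s • b s)
    (hnot1 : ∀ i, IsUnit ((lam i : ZMod (p ^ j)) - 1) ∧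
      IsUnit ((lam i : ZMod (p ^ j)) + 1))
    (hdiff : ∀ s t, s ≠ t → IsUnit (μ s - μ t)) :
    (∀ (v : Fin n ⊕ Fin n → ZMod (p ^ j)) (c : ZMod (p ^ j)),
      A.mulVec v = c • v → v ⬝ᵥ Qn.mulVec v = 0) ∧
    (∃ w : Module.Basis (Fin n ⊕ Fin n) (ZMod (p ^ j)) (Fin n ⊕ Fin n → ZMod (p ^ j)),
      (∀ s, A.mulVec (w s) = μ s • w s) ∧
      ∀ s t, w s ⬝ᵥ Qn.mulVec (w t) = Qn s t) ∧
    ∃ g : (Matrix (Fin n ⊕ Fin n) (Fin n ⊕ Fin n) (ZMod (p ^ j)))ˣ,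
      (g : Matrix (Fin n ⊕ Fin n) (Fin n ⊕ Fin n) (ZMod (p ^ j)))ᵀ * Qn *
          (g : Matrix (Fin n ⊕ Fin n) (Fin n ⊕ Fin n) (ZMod (p ^ j))) = Qn ∧
      ((g⁻¹ : (Matrix (Fin n ⊕ Fin n) (Fin n ⊕ Fin n) (ZMod (p ^ j)))ˣ) :
          Matrix (Fin n ⊕ Fin n) (Fin n ⊕ Fin n) (ZMod (p ^ j))) * A *
        (g : Matrix (Fin n ⊕ Fin n) (Fin n ⊕ Fin n) (ZMod (p ^ j))) =
          Matrix.diagonal μ := by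
  classical
  have hQQ : Qn * Qn = 1 := by
    rw [hQn, Matrix.fromBlocks_multiply]
    simp [Matrix.fromBlocks_one]
  have hQsymm : Qnᵀ = Qn := by
    rw [hQn, Matrix.fromBlocks_transpose]
    simp
  have hμl : ∀ i, μ (Sum.inl i) = ((lam i : (ZMod (p ^ j))ˣ) : ZMod (p ^ j)) := by
    simp [hμ]
  have hμr : ∀ i, μ (Sum.inr i) = (((lam i)⁻¹ : (ZMod (p ^ j))ˣ) : ZMod (p ^ j)) := by
    simp [hμ]
  -- invariance of the form under A
  have hinv : ∀ u v : Fin n ⊕ Fin n → ZMod (p ^ j),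
      A.mulVec u ⬝ᵥ Qn.mulVec (A.mulVec v) = u ⬝ᵥ Qn.mulVec v := by
    intro u v
    rw [dot_conj', hO]
  -- symmetry of the form
  have hBsymm : ∀ u v : Fin n ⊕ Fin n → ZMod (p ^ j),
      u ⬝ᵥ Qn.mulVec v = v ⬝ᵥ Qn.mulVec u := by
    intro u v
    conv_lhs => rw [Matrix.dotProduct_mulVec, ← hQsymm, Matrix.vecMul_transpose]
    exact dotProduct_comm _ _
  -- eigenvector orthogonality relation
  have horth : ∀ s t, (μ s * μ t - 1) * (b s ⬝ᵥ Qn.mulVec (b t)) = 0 := by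
    intro s t
    have h := hinv (b s) (b t)
    rw [hb s, hb t, Matrix.mulVec_smul, smul_dotProduct, dotProduct_smul,
      smul_eq_mul, smul_eq_mul] at h
    linear_combination h
  have hzero : ∀ s t, IsUnit (μ s * μ t - 1) → b s ⬝ᵥ Qn.mulVec (b t) = 0 := by
    intro s t h
    exact (h.mul_right_eq_zero).mp (horth s t)
  -- unit facts
  have hUll : ∀ i i' : Fin n, IsUnit (μ (Sum.inl i) * μ (Sum.inl i') - 1) := by
    intro i i'
    by_cases h : i = i'
    · subst h
      have h2 : μ (Sum.inl i) * μ (Sum.inl i) - 1 =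
          ((lam i : ZMod (p ^ j)) - 1) * ((lam i : ZMod (p ^ j)) + 1) := by
        rw [hμl]; ring
      rw [h2]
      exact (hnot1 i).1.mul (hnot1 i).2
    · have hu := hdiff (Sum.inl i') (Sum.inr i) (by simp)
      have ha : (((lam i)⁻¹ : (ZMod (p ^ j))ˣ) : ZMod (p ^ j)) * (lam i : ZMod (p ^ j)) = 1 :=
        Units.inv_mul _
      have h2 : μ (Sum.inl i) * μ (Sum.inl i') - 1 =
          (lam i : ZMod (p ^ j)) * (μ (Sum.inl i') - μ (Sum.inr i)) := by
        rw [hμl, hμl, hμr]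
        linear_combination ha
      rw [h2]
      exact (lam i).isUnit.mul hu
  have hUrr : ∀ i i' : Fin n, IsUnit (μ (Sum.inr i) * μ (Sum.inr i') - 1) := by
    intro i i'
    have ha : (((lam i)⁻¹ : (ZMod (p ^ j))ˣ) : ZMod (p ^ j)) * (lam i : ZMod (p ^ j)) = 1 :=
      Units.inv_mul _
    by_cases h : i = i'
    · subst h
      have h2 : μ (Sum.inr i) * μ (Sum.inr i) - 1 =
          ((((lam i)⁻¹ : (ZMod (p ^ j))ˣ) : ZMod (p ^ j)) *
            (((lam i)⁻¹ : (ZMod (p ^ j))ˣ) : ZMod (p ^ j))) *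
          (-(((lam i : ZMod (p ^ j)) - 1) * ((lam i : ZMod (p ^ j)) + 1))) := by
        rw [hμr]
        linear_combination ((((lam i)⁻¹ : (ZMod (p ^ j))ˣ) : ZMod (p ^ j)) *
          (lam i : ZMod (p ^ j)) + 1) * ha
      rw [h2]
      exact (((lam i)⁻¹.isUnit.mul (lam i)⁻¹.isUnit)).mul ((hnot1 i).1.mul (hnot1 i).2).neg
    · have hu := hdiff (Sum.inr i') (Sum.inl i) (by simp)
      have h2 : μ (Sum.inr i) * μ (Sum.inr i') - 1 =
          (((lam i)⁻¹ : (ZMod (p ^ j))ˣ) : ZMod (p ^ j)) * (μ (Sum.inr i') - μ (Sum.inl i)) := by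
        rw [hμr, hμr, hμl]
        linear_combination ha
      rw [h2]
      exact (lam i)⁻¹.isUnit.mul hu
  have hUlr : ∀ i i' : Fin n, i ≠ i' → IsUnit (μ (Sum.inl i) * μ (Sum.inr i') - 1) := by
    intro i i' h
    have hb' : (((lam i')⁻¹ : (ZMod (p ^ j))ˣ) : ZMod (p ^ j)) * (lam i' : ZMod (p ^ j)) = 1 :=
      Units.inv_mul _
    have hu := hdiff (Sum.inl i) (Sum.inl i') (by simp [h])
    have h2 : μ (Sum.inl i) * μ (Sum.inr i') - 1 =
        (((lam i')⁻¹ : (ZMod (p ^ j))ˣ) : ZMod (p ^ j)) * (μ (Sum.inl i) - μ (Sum.inl i')) := by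
      rw [hμl, hμr, hμl]
      linear_combination hb'
    rw [h2]
    exact (lam i')⁻¹.isUnit.mul hu
  have hUrl : ∀ i i' : Fin n, i ≠ i' → IsUnit (μ (Sum.inr i) * μ (Sum.inl i') - 1) := by
    intro i i' h
    have ha : (((lam i)⁻¹ : (ZMod (p ^ j))ˣ) : ZMod (p ^ j)) * (lam i : ZMod (p ^ j)) = 1 :=
      Units.inv_mul _
    have hu := hdiff (Sum.inl i') (Sum.inl i) (by simp [Ne.symm h])
    have h2 : μ (Sum.inr i) * μ (Sum.inl i') - 1 =
        (((lam i)⁻¹ : (ZMod (p ^ j))ˣ) : ZMod (p ^ j)) * (μ (Sum.inl i') - μ (Sum.inl i)) := by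
      rw [hμr, hμl, hμl]
      linear_combination ha
    rw [h2]
    exact (lam i)⁻¹.isUnit.mul hu
  -- Gram entries
  have hGll : ∀ i i', b (Sum.inl i) ⬝ᵥ Qn.mulVec (b (Sum.inl i')) = 0 :=
    fun i i' => hzero _ _ (hUll i i')
  have hGrr : ∀ i i', b (Sum.inr i) ⬝ᵥ Qn.mulVec (b (Sum.inr i')) = 0 :=
    fun i i' => hzero _ _ (hUrr i i')
  have hGlr : ∀ i i', i ≠ i' → b (Sum.inl i) ⬝ᵥ Qn.mulVec (b (Sum.inr i')) = 0 :=
    fun i i' h => hzero _ _ (hUlr i i' h)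
  have hGrl : ∀ i i', i ≠ i' → b (Sum.inr i) ⬝ᵥ Qn.mulVec (b (Sum.inl i')) = 0 :=
    fun i i' h => hzero _ _ (hUrl i i' h)
  set c : Fin n → ZMod (p ^ j) := fun i => b (Sum.inl i) ⬝ᵥ Qn.mulVec (b (Sum.inr i)) with hc_def
  have hGrl_eq : ∀ i, b (Sum.inr i) ⬝ᵥ Qn.mulVec (b (Sum.inl i)) = c i :=
    fun i => hBsymm _ _
  -- the matrix of the basis b
  set Pb : Matrix (Fin n ⊕ Fin n) (Fin n ⊕ Fin n) (ZMod (p ^ j)) :=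
    (Pi.basisFun (ZMod (p ^ j)) (Fin n ⊕ Fin n)).toMatrix ⇑b with hPb_def
  have hPb : ∀ s t, Pb s t = b t s := by
    intro s t
    simp [hPb_def, Module.Basis.toMatrix_apply]
  have hG : ∀ s t, (Pbᵀ * Qn * Pb) s t = b s ⬝ᵥ Qn.mulVec (b t) := by
    intro s t
    rw [gram_entry']
    have e1 : (fun k => Pb k s) = b s := funext fun k => hPb k s
    have e2 : (fun k => Pb k t) = b t := funext fun k => hPb k t
    rw [e1, e2]
  ------------------------------------------------------------------
  -- Part 1 : every eigenvector is isotropic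
  ------------------------------------------------------------------
  have part1 : ∀ (v : Fin n ⊕ Fin n → ZMod (p ^ j)) (c0 : ZMod (p ^ j)),
      A.mulVec v = c0 • v → v ⬝ᵥ Qn.mulVec v = 0 := by
    intro v c0 heig
    set r : (Fin n ⊕ Fin n) → ZMod (p ^ j) := fun s => b.repr v s with hr
    have hv : ∑ s, r s • b s = v := b.sum_repr v
    have hAv : A.mulVec v = ∑ s, (r s * μ s) • b s := by
      conv_lhs => rw [← hv]
      rw [show A.mulVec (∑ s, r s • b s) = ∑ s, r s • A.mulVec (b s) from by
        simp only [← Matrix.mulVecLin_apply]; rw [map_sum]; simp]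
      exact Finset.sum_congr rfl fun s _ => by rw [hb, smul_smul]
    have hcv : c0 • v = ∑ s, (c0 * r s) • b s := by
      conv_lhs => rw [← hv]
      rw [Finset.smul_sum]
      exact Finset.sum_congr rfl fun s _ => by rw [smul_smul]
    have hco : ∀ s, r s * μ s = c0 * r s := by
      have h3 : (∑ s, (r s * μ s) • b s) = ∑ s, (c0 * r s) • b s := by
        rw [← hAv, heig, hcv]
      intro s
      have h4 := congrArg (fun x => b.repr x s) h3
      simpa only [Module.Basis.repr_sum_self] using h4
    have hprod : ∀ i, r (Sum.inl i) * r (Sum.inr i) = 0 := by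
      intro i
      have h1 := hco (Sum.inl i)
      have h2 := hco (Sum.inr i)
      have hu := hdiff (Sum.inl i) (Sum.inr i) (by simp)
      have h3 : (μ (Sum.inl i) - μ (Sum.inr i)) * (r (Sum.inl i) * r (Sum.inr i)) = 0 := by
        linear_combination r (Sum.inr i) * h1 - r (Sum.inl i) * h2
      exact hu.mul_right_eq_zero.mp h3
    have hvP : v = Pb.mulVec r := by
      funext k
      conv_lhs => rw [← hv]
      rw [show (∑ s, r s • b s) k = ∑ s, r s * b s k from by simp [Finset.sum_apply]]
      simp only [Matrix.mulVec, dotProduct, hPb]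
      exact Finset.sum_congr rfl fun s _ => mul_comm _ _
    have hGM : Pbᵀ * Qn * Pb = Matrix.of (fun s t => b s ⬝ᵥ Qn.mulVec (b t)) := by
      ext s t
      rw [hG]
      rfl
    have hBv : v ⬝ᵥ Qn.mulVec v = ∑ s, r s * ∑ t, (b s ⬝ᵥ Qn.mulVec (b t)) * r t := by
      rw [hvP, dot_conj', hGM]
      simp only [dotProduct, Matrix.mulVec, Matrix.of_apply]
    rw [hBv]
    refine Finset.sum_eq_zero fun s _ => ?_
    rw [Finset.mul_sum]
    refine Finset.sum_eq_zero fun t _ => ?_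
    rcases s with i | i <;> rcases t with i' | i'
    · rw [hGll]; ring
    · by_cases h : i = i'
      · subst h
        have hp0 := hprod i
        linear_combination (b (Sum.inl i) ⬝ᵥ Qn.mulVec (b (Sum.inr i))) * hp0
      · rw [hGlr i i' h]; ring
    · by_cases h : i = i'
      · subst h
        rw [hGrl_eq i]
        have hp0 := hprod i
        linear_combination (c i) * hp0
      · rw [hGrl i i' h]; ring
    · rw [hGrr]; ring
  ------------------------------------------------------------------
  -- the coefficients c i are units
  ------------------------------------------------------------------
  set d : Fin n ⊕ Fin n → ZMod (p ^ j) := Sum.elim c c with hd_def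
  have hGd : Pbᵀ * Qn * Pb = Qn * Matrix.diagonal d := by
    ext s t
    rw [hG s t, Matrix.mul_diagonal]
    rcases s with i | i <;> rcases t with i' | i'
    · rw [hGll, hQn]; simp
    · by_cases h : i = i'
      · subst h
        rw [show (b (Sum.inl i) ⬝ᵥ Qn.mulVec (b (Sum.inr i))) = c i from rfl, hQn]
        simp [Matrix.one_apply, show d (Sum.inr i) = c i from rfl]
      · rw [hGlr i i' h, hQn]
        simp [Matrix.one_apply, h]
    · by_cases h : i = i'
      · subst h
        rw [hGrl_eq i, hQn]
        simp [Matrix.one_apply, show d (Sum.inl i) = c i from rfl]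
      · rw [hGrl i i' h, hQn]
        simp [Matrix.one_apply, h]
    · rw [hGrr, hQn]; simp
  haveI iQ : Invertible Qn := ⟨Qn, hQQ, hQQ⟩
  haveI iPb : Invertible Pb := (Pi.basisFun (ZMod (p ^ j)) (Fin n ⊕ Fin n)).invertibleToMatrix b
  haveI iPbT : Invertible Pbᵀ := Matrix.invertibleTranspose Pb
  haveI iPQ : Invertible (Pbᵀ * Qn) := invertibleMul _ _
  haveI iG : Invertible (Pbᵀ * Qn * Pb) := invertibleMul _ _
  haveI iG2 : Invertible (Qn * Matrix.diagonal d) := hGd ▸ iG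
  have hdu : IsUnit (∏ s, d s) := by
    have h5 : IsUnit (Qn * Matrix.diagonal d).det := Matrix.isUnit_det_of_invertible _
    rw [Matrix.det_mul, Matrix.det_diagonal] at h5
    exact isUnit_of_mul_isUnit_right h5
  have hds : ∀ s, IsUnit (d s) := by
    intro s
    rw [← Finset.mul_prod_erase Finset.univ d (Finset.mem_univ s)] at hdu
    exact isUnit_of_mul_isUnit_left hdu
  have hcu : ∀ i, IsUnit (c i) := fun i => hds (Sum.inl i)
  ------------------------------------------------------------------
  -- Part 2 : the normalized eigenbasis
  ------------------------------------------------------------------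
  set u : Fin n ⊕ Fin n → (ZMod (p ^ j))ˣ :=
    Sum.elim (fun _ => 1) (fun i => ((hcu i).unit)⁻¹) with hu_def
  set w : Module.Basis (Fin n ⊕ Fin n) (ZMod (p ^ j)) (Fin n ⊕ Fin n → ZMod (p ^ j)) :=
    b.unitsSMul u with hw_def
  have hw : ∀ s, w s = ((u s : ZMod (p ^ j))) • b s := by
    intro s
    rw [hw_def, Module.Basis.unitsSMul_apply, Units.smul_def]
  have heigw : ∀ s, A.mulVec (w s) = μ s • w s := by
    intro s
    rw [hw, Matrix.mulVec_smul, hb, smul_comm]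
  have hGramw : ∀ s t, w s ⬝ᵥ Qn.mulVec (w t) = Qn s t := by
    intro s t
    rw [hw, hw, Matrix.mulVec_smul, smul_dotProduct, dotProduct_smul,
      smul_eq_mul, smul_eq_mul]
    rcases s with i | i <;> rcases t with i' | i'
    · rw [hGll, hQn]; simp
    · by_cases h : i = i'
      · subst h
        rw [show (b (Sum.inl i) ⬝ᵥ Qn.mulVec (b (Sum.inr i))) = c i from rfl, hQn]
        simp only [Matrix.fromBlocks_apply₁₂, Matrix.one_apply_eq]
        rw [show ((u (Sum.inl i) : ZMod (p ^ j))) = 1 from rfl, one_mul]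
        exact (hcu i).val_inv_mul
      · rw [hGlr i i' h, hQn]
        simp [Matrix.one_apply, h]
    · by_cases h : i = i'
      · subst h
        rw [hGrl_eq i, hQn]
        simp only [Matrix.fromBlocks_apply₂₁, Matrix.one_apply_eq]
        rw [show ((u (Sum.inl i) : ZMod (p ^ j))) = 1 from rfl, one_mul]
        exact (hcu i).val_inv_mul
      · rw [hGrl i i' h, hQn]
        simp [Matrix.one_apply, h]
    · rw [hGrr, hQn]; simp
  ------------------------------------------------------------------
  -- Part 3 : conjugation
  ------------------------------------------------------------------
  set Pw : Matrix (Fin n ⊕ Fin n) (Fin n ⊕ Fin n) (ZMod (p ^ j)) :=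
    (Pi.basisFun (ZMod (p ^ j)) (Fin n ⊕ Fin n)).toMatrix ⇑w with hPw_def
  have hPw : ∀ s t, Pw s t = w t s := by
    intro s t
    simp [hPw_def, Module.Basis.toMatrix_apply]
  haveI iPw : Invertible Pw := (Pi.basisFun (ZMod (p ^ j)) (Fin n ⊕ Fin n)).invertibleToMatrix w
  have hgO : Pwᵀ * Qn * Pw = Qn := by
    ext s t
    rw [gram_entry']
    have e1 : (fun k => Pw k s) = w s := funext fun k => hPw k s
    have e2 : (fun k => Pw k t) = w t := funext fun k => hPw k t
    rw [e1, e2, hGramw]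
  have hconj : A * Pw = Pw * Matrix.diagonal μ := by
    ext s t
    rw [Matrix.mul_apply, Matrix.mul_diagonal]
    have h7 : (∑ k, A s k * Pw k t) = A.mulVec (w t) s := by
      simp only [Matrix.mulVec, dotProduct, hPw]
    rw [h7, heigw, Pi.smul_apply, smul_eq_mul, hPw, mul_comm]
  refine ⟨part1, ⟨w, heigw, hGramw⟩, unitOfInvertible Pw, ?_, ?_⟩
  · exact hgO
  · show ⅟Pw * A * Pw = Matrix.diagonal μ
    rw [mul_assoc, hconj, ← mul_assoc, invOf_mul_self, one_mul]
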